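/- The unitary matrices U_m (m = 0,…,n−1) with entries ⟨j|U_m|k⟩ = (1/√d) exp[2πi jk/d + 2πi(j + kd)m/n] form an unweighted unitary 1-design in dimension d for every n ≥ d², i.e. (1/n)∑_m U_m ⊗ U_m† = T/d. -/

import Mathlib

open Matrix
open scoped ComplexConjugate

private lemma sum_exp_fin (n : ℕ) (hn : 0 < n) (a : ℤ) :
    ∑ m : Fin n, Complex.exp (2 * Real.pi * Complex.I * ((a : ℂ) * (m : ℕ) / n))
      = if (n : ℤ) ∣ a then (n : ℂ) else 0 := by
  have hn' : (n : ℂ) ≠ 0 := Nat.cast_ne_zero.mpr hn.ne'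
  set z : ℂ := Complex.exp (2 * Real.pi * Complex.I * a / n) with hz
  have hterm : ∀ m : ℕ, Complex.exp (2 * Real.pi * Complex.I * ((a : ℂ) * m / n)) = z ^ m := by
    intro m
    rw [hz, ← Complex.exp_nat_mul]
    congr 1
    ring
  have hzn : z ^ n = 1 := by
    rw [hz, ← Complex.exp_nat_mul]
    have : (n : ℂ) * (2 * Real.pi * Complex.I * a / n) = a * (2 * Real.pi * Complex.I) := by
      field_simp
    rw [this]
    exact Complex.exp_int_mul_two_pi_mul_I a
  simp only [hterm]
  rw [Fin.sum_univ_eq_sum_range (fun m => z ^ m)]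
  by_cases hdvd : (n : ℤ) ∣ a
  · obtain ⟨b, hb⟩ := id hdvd
    have hz1 : z = 1 := by
      rw [hz]
      have : 2 * Real.pi * Complex.I * a / n = (b : ℂ) * (2 * Real.pi * Complex.I) := by
        rw [hb]; push_cast; field_simp
      rw [this]
      exact Complex.exp_int_mul_two_pi_mul_I b
    simp [hz1, hdvd]
  · have hz1 : z ≠ 1 := by
      intro h
      rw [hz, Complex.exp_eq_one_iff] at h
      obtain ⟨k, hk⟩ := h
      apply hdvd
      refine ⟨k, ?_⟩
      have h2 : (2 * Real.pi * Complex.I : ℂ) ≠ 0 := by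
        simp [Real.pi_ne_zero, Complex.I_ne_zero]
      have : (a : ℂ) = n * k := by
        field_simp at hk
        exact hk
      exact_mod_cast this
    rw [geom_sum_eq hz1, hzn]
    simp [hdvd]

/-- The matrices with entries `⟨j|U_m|k⟩ = (1/√d) exp[2πi jk/d + 2πi (j + k d) m / n]`. -/
noncomputable def Udes (d n : ℕ) (m : Fin n) : Matrix (Fin d) (Fin d) ℂ :=
  Matrix.of fun j k : Fin d =>
    (1 / (Real.sqrt d : ℂ)) *
      Complex.exp (2 * Real.pi * Complex.I * (((j : ℕ) : ℂ) * ((k : ℕ) : ℂ) / (d : ℂ))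
        + 2 * Real.pi * Complex.I * ((((j : ℕ) : ℂ) + ((k : ℕ) : ℂ) * (d : ℂ)) * ((m : ℕ) : ℂ) / (n : ℂ)))

private lemma sqrt_fac (d : ℕ) : (1 / (Real.sqrt d : ℂ)) * (1 / (Real.sqrt d : ℂ)) = ((d : ℂ))⁻¹ := by
  rw [div_mul_div_comm, one_mul]
  have : ((Real.sqrt d : ℂ)) * (Real.sqrt d : ℂ) = (d : ℂ) := by
    norm_cast
    exact Real.mul_self_sqrt (Nat.cast_nonneg d)
  rw [this, one_div]

private lemma rearr (c x y : ℂ) : c * x * c * y = c * c * (x * y) := by ring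

private lemma Udes_mul_conj (d n : ℕ) (hd : (d : ℂ) ≠ 0) (hn : (n : ℂ) ≠ 0)
    (m : Fin n) (j k k' j' : Fin d) :
    Udes d n m j k * conj (Udes d n m k' j')
      = ((d : ℂ))⁻¹
          * Complex.exp (2 * Real.pi * Complex.I *
              ((((j : ℕ) : ℂ) * ((k : ℕ) : ℂ) - ((k' : ℕ) : ℂ) * ((j' : ℕ) : ℂ)) / d))
          * Complex.exp (2 * Real.pi * Complex.I *
              (((((j : ℕ) + (k : ℕ) * d : ℤ) - ((k' : ℕ) + (j' : ℕ) * d : ℤ) : ℤ) : ℂ)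
                * ((m : ℕ) : ℂ) / n)) := by
  simp only [Udes, Matrix.of_apply, _root_.map_mul, ← Complex.exp_conj, map_add, map_div₀,
    _root_.map_one, Complex.conj_I, Complex.conj_natCast, Complex.conj_ofReal, map_ofNat]
  rw [mul_mul_mul_comm, sqrt_fac, ← Complex.exp_add]
  conv_rhs => rw [mul_assoc, ← Complex.exp_add]
  congr 1
  push_cast
  field_simp
  ring

private lemma nat_decompose {d j k j' k' : ℕ} (hd : 0 < d) (hj : j < d) (hk' : k' < d)
    (h : j + k * d = k' + j' * d) : j = k' ∧ k = j' := by
  have h1 : j = k' := by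
    have := congrArg (· % d) h
    simpa [Nat.add_mul_mod_self_right, Nat.mod_eq_of_lt hj, Nat.mod_eq_of_lt hk'] using this
  subst h1
  have h2 : k * d = j' * d := by omega
  exact ⟨rfl, Nat.eq_of_mul_eq_mul_right hd h2⟩

theorem Udes_is_one_design (d n : ℕ) (hd : 0 < d) (hn : d ^ 2 ≤ n) :
    (∀ m : Fin n, Udes d n m ∈ Matrix.unitaryGroup (Fin d) ℂ) ∧
      ∀ j j' k k' : Fin d,
        ((n : ℂ))⁻¹ * ∑ m : Fin n, Udes d n m j k * conj (Udes d n m k' j')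
          = if j = k' ∧ j' = k then ((d : ℂ))⁻¹ else 0 := by
  have hn0 : 0 < n := lt_of_lt_of_le (by positivity) hn
  have hdC : (d : ℂ) ≠ 0 := Nat.cast_ne_zero.mpr hd.ne'
  have hnC : (n : ℂ) ≠ 0 := Nat.cast_ne_zero.mpr hn0.ne'
  constructor
  · -- unitarity
    intro m
    rw [Matrix.mem_unitaryGroup_iff]
    ext j j'
    rw [Matrix.mul_apply, Matrix.one_apply]
    have hterm : ∀ k : Fin d, Udes d n m j k * (star (Udes d n m)) k j'
        = ((d : ℂ))⁻¹
          * Complex.exp (2 * Real.pi * Complex.I *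
              (((((j : ℕ) : ℤ) - ((j' : ℕ) : ℤ) : ℤ) : ℂ) * ((m : ℕ) : ℂ) / n))
          * Complex.exp (2 * Real.pi * Complex.I *
              (((((j : ℕ) : ℤ) - ((j' : ℕ) : ℤ) : ℤ) : ℂ) * ((k : ℕ) : ℂ) / d)) := by
      intro k
      simp only [Matrix.star_apply, RCLike.star_def, Udes, Matrix.of_apply, _root_.map_mul,
        ← Complex.exp_conj, map_add, map_div₀, _root_.map_one, Complex.conj_I,
        Complex.conj_natCast, Complex.conj_ofReal, map_ofNat]
      rw [mul_mul_mul_comm, sqrt_fac, ← Complex.exp_add]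
      conv_rhs => rw [mul_assoc, ← Complex.exp_add]
      congr 1
      push_cast
      field_simp
      ring
    simp only [hterm]
    rw [← Finset.mul_sum, sum_exp_fin d hd (((j : ℕ) : ℤ) - ((j' : ℕ) : ℤ))]
    by_cases hjj : j = j'
    · subst hjj
      simp [hdC]
    · have : ¬ ((d : ℤ) ∣ ((j : ℕ) : ℤ) - ((j' : ℕ) : ℤ)) := by
        intro hdvd
        have ha : ((j : ℕ) : ℤ) - ((j' : ℕ) : ℤ) ≠ 0 := by
          intro h0
          exact hjj (Fin.ext (by omega))
        have h1 := Int.le_of_dvd (abs_pos.mpr ha) ((dvd_abs _ _).mpr hdvd)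
        have h4 : |((j : ℕ) : ℤ) - ((j' : ℕ) : ℤ)| < (d : ℤ) := by
          rw [abs_lt]
          have h2 : (j : ℕ) < d := j.isLt
          have h3 : (j' : ℕ) < d := j'.isLt
          omega
        linarith
      simp [this, hjj]
  · -- 1-design
    intro j j' k k'
    set a : ℤ := ((j : ℕ) + (k : ℕ) * d : ℤ) - ((k' : ℕ) + (j' : ℕ) * d : ℤ) with ha
    simp only [Udes_mul_conj d n hdC hnC _ j k k' j']
    rw [← Finset.mul_sum, ← ha, sum_exp_fin n hn0 a]
    have hjd : (j : ℕ) < d := j.isLt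
    have hkd : (k : ℕ) < d := k.isLt
    have hj'd : (j' : ℕ) < d := j'.isLt
    have hk'd : (k' : ℕ) < d := k'.isLt
    by_cases hcase : j = k' ∧ j' = k
    · obtain ⟨h1, h2⟩ := hcase
      have ha0 : a = 0 := by rw [ha, h1, h2]; ring
      have hexp : (((j : ℕ) : ℂ) * ((k : ℕ) : ℂ) - ((k' : ℕ) : ℂ) * ((j' : ℕ) : ℂ)) = 0 := by
        rw [h1, h2]; ring
      rw [ha0, hexp]
      rw [if_pos (⟨h1, h2⟩ : j = k' ∧ j' = k)]
      simp only [Int.cast_zero, zero_div, zero_mul, mul_zero, Complex.exp_zero, mul_one, dvd_zero, if_true]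
      field_simp
    · have ha0 : a ≠ 0 := by
        intro h0
        apply hcase
        have heqz : (((j : ℕ) + (k : ℕ) * d : ℕ) : ℤ) = (((k' : ℕ) + (j' : ℕ) * d : ℕ) : ℤ) := by
          push_cast
          rw [ha] at h0
          linarith
        have heq : (j : ℕ) + (k : ℕ) * d = (k' : ℕ) + (j' : ℕ) * d := by exact_mod_cast heqz
        obtain ⟨e1, e2⟩ := nat_decompose hd hjd hk'd heq
        exact ⟨Fin.ext e1, Fin.ext e2.symm⟩
      have hb1 : (j : ℕ) + (k : ℕ) * d < d ^ 2 := by nlinarith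
      have hb2 : (k' : ℕ) + (j' : ℕ) * d < d ^ 2 := by nlinarith
      have hndvd : ¬ ((n : ℤ) ∣ a) := by
        intro hdvd
        have h1 := Int.le_of_dvd (abs_pos.mpr ha0) ((dvd_abs _ _).mpr hdvd)
        have hb1z : (((j : ℕ) : ℤ) + ((k : ℕ) : ℤ) * d) < (d : ℤ) ^ 2 := by exact_mod_cast hb1
        have hb2z : (((k' : ℕ) : ℤ) + ((j' : ℕ) : ℤ) * d) < (d : ℤ) ^ 2 := by exact_mod_cast hb2
        have hp1 : (0 : ℤ) ≤ ((j : ℕ) : ℤ) + ((k : ℕ) : ℤ) * d := by positivity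
        have hp2 : (0 : ℤ) ≤ ((k' : ℕ) : ℤ) + ((j' : ℕ) : ℤ) * d := by positivity
        have h2 : |a| < (d : ℤ) ^ 2 := by
          rw [abs_lt, ha]
          constructor <;> linarith
        have h3 : (d : ℤ) ^ 2 ≤ (n : ℤ) := by exact_mod_cast hn
        linarith
      rw [if_neg hndvd, if_neg hcase]
      simp
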